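/- Let E be a finite-dimensional complex (or real) inner product space and P, Q : E → E linear projectors (P² = P, Q² = Q). Then P − Q is an isomorphism of E if and only if both restrictions P|_{ker Q} : ker Q → P(E) and P*|_{ker Q*} : ker Q* → P*(E) are isomorphisms. -/
import Mathlib

open LinearMap Submodule

section Helpers

variable {E : Type*} [NormedAddCommGroup E] [InnerProductSpace ℂ E] [FiniteDimensional ℂ E]

theorem kerAdj (T : E →ₗ[ℂ] E) : ker (adjoint T) = (range T)ᗮ := by
  ext x
  simp only [mem_ker, Submodule.mem_orthogonal]
  constructor
  · intro h y hy
    obtain ⟨z, rfl⟩ := hy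
    rw [← adjoint_inner_right, h, inner_zero_right]
  · intro h
    rw [← inner_self_eq_zero (𝕜 := ℂ), adjoint_inner_right]
    exact h _ ⟨_, rfl⟩

theorem rangeAdj (T : E →ₗ[ℂ] E) : range (adjoint T) = (ker T)ᗮ := by
  have := kerAdj (adjoint T)
  rw [adjoint_adjoint] at this
  rw [this, orthogonal_orthogonal]

theorem mapRange (T : E →ₗ[ℂ] E) (K : Submodule ℂ E) :
    Submodule.map T K = range T ↔ ker T ⊔ K = ⊤ := by
  constructor
  · intro h
    rw [eq_top_iff]
    intro x _
    have hx : T x ∈ Submodule.map T K := h ▸ mem_range_self T x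
    obtain ⟨y, hyK, hy⟩ := hx
    have : x - y ∈ ker T := by simp [mem_ker, map_sub, hy]
    have : x = (x - y) + y := (sub_add_cancel x y).symm
    rw [this]
    exact Submodule.add_mem_sup ‹x - y ∈ ker T› hyK
  · intro h
    apply le_antisymm (LinearMap.map_le_range)
    rintro _ ⟨x, rfl⟩
    have hx : x ∈ ker T ⊔ K := h ▸ Submodule.mem_top
    obtain ⟨u, hu, v, hv, rfl⟩ := Submodule.mem_sup.1 hx
    have : T (u + v) = T v := by simp [mem_ker.1 hu]
    rw [this]
    exact ⟨v, hv, rfl⟩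

theorem kerSub (P Q : E →ₗ[ℂ] E) (hP : P ∘ₗ P = P) (hQ : Q ∘ₗ Q = Q) :
    ker (P - Q) = ⊥ ↔ ker P ⊓ ker Q = ⊥ ∧ range P ⊓ range Q = ⊥ := by
  have hP' : ∀ x, P (P x) = P x := fun x => congrFun (congrArg DFunLike.coe hP) x
  have hQ' : ∀ x, Q (Q x) = Q x := fun x => congrFun (congrArg DFunLike.coe hQ) x
  constructor
  · intro h
    constructor
    · rw [eq_bot_iff]; rintro x ⟨hx1, hx2⟩
      have : x ∈ ker (P - Q) := by
        simp [mem_ker] at hx1 hx2 ⊢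
        simp [hx1, hx2]
      rwa [h, Submodule.mem_bot] at this
    · rw [eq_bot_iff]; rintro x ⟨⟨a, ha⟩, ⟨b, hb⟩⟩
      have hPx : P x = x := by rw [← ha, hP']
      have hQx : Q x = x := by rw [← hb, hQ']
      have : x ∈ ker (P - Q) := by simp [mem_ker, hPx, hQx]
      rwa [h, Submodule.mem_bot] at this
  · rintro ⟨h1, h2⟩
    rw [eq_bot_iff]
    intro x hx
    have hx' : P x = Q x := by
      have := mem_ker.1 hx; simpa [sub_eq_zero] using this
    have hy : P x ∈ range P ⊓ range Q := ⟨⟨x, rfl⟩, ⟨x, hx'.symm ▸ rfl⟩⟩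
    rw [h2, Submodule.mem_bot] at hy
    have hxk : x ∈ ker P ⊓ ker Q := ⟨mem_ker.2 hy, mem_ker.2 (by rw [← hx', hy])⟩
    rw [h1, Submodule.mem_bot] at hxk
    simp [hxk]

theorem orthEqTop (K : Submodule ℂ E) : Kᗮ = ⊤ ↔ K = ⊥ := by
  constructor
  · intro h
    rw [← K.orthogonal_orthogonal, h, Submodule.top_orthogonal_eq_bot]
  · rintro rfl; exact Submodule.bot_orthogonal_eq_top

theorem orthEqBot (K : Submodule ℂ E) : Kᗮ = ⊥ ↔ K = ⊤ := by
  constructor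
  · intro h
    rw [← K.orthogonal_orthogonal, h, Submodule.bot_orthogonal_eq_top]
  · rintro rfl; exact Submodule.top_orthogonal_eq_bot

theorem supOrth (K L : Submodule ℂ E) : Kᗮ ⊔ Lᗮ = (K ⊓ L)ᗮ := by
  conv_rhs => rw [← K.orthogonal_orthogonal, ← L.orthogonal_orthogonal,
    Submodule.inf_orthogonal, Submodule.orthogonal_orthogonal]

theorem bijIff (T : E →ₗ[ℂ] E) :
    Function.Bijective T ↔ ker T = ⊥ ∧ ker (adjoint T) = ⊥ := by
  constructor
  · intro h
    refine ⟨ker_eq_bot.2 h.injective, ?_⟩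
    rw [kerAdj, range_eq_top.2 h.surjective, Submodule.top_orthogonal_eq_bot]
  · rintro ⟨h, -⟩
    have hinj := ker_eq_bot.1 h
    exact ⟨hinj, (LinearMap.injective_iff_surjective).1 hinj⟩

end Helpers


/-- Lemma A.9, (i) ⇔ (ii): for projectors `P, Q` on a finite-dimensional inner product
space `E`, `P − Q` is an isomorphism iff both `P|_{ker Q} : ker Q → P(E)` and
`P*|_{ker Q*} : ker Q* → P*(E)` are isomorphisms. -/
theorem stmt_9 {E : Type*} [NormedAddCommGroup E] [InnerProductSpace ℂ E]
    [FiniteDimensional ℂ E]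
    (P Q : E →ₗ[ℂ] E) (hP : P ∘ₗ P = P) (hQ : Q ∘ₗ Q = Q) :
    Function.Bijective (P - Q) ↔
      ((Submodule.map P (LinearMap.ker Q) = LinearMap.range P ∧
          LinearMap.ker Q ⊓ LinearMap.ker P = ⊥) ∧
        (Submodule.map (LinearMap.adjoint P) (LinearMap.ker (LinearMap.adjoint Q)) =
            LinearMap.range (LinearMap.adjoint P) ∧
          LinearMap.ker (LinearMap.adjoint Q) ⊓ LinearMap.ker (LinearMap.adjoint P) = ⊥)) := by
  have hPa : adjoint P ∘ₗ adjoint P = adjoint P := by rw [← adjoint_comp, hP]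
  have hQa : adjoint Q ∘ₗ adjoint Q = adjoint Q := by rw [← adjoint_comp, hQ]
  rw [bijIff, map_sub, kerSub P Q hP hQ, kerSub _ _ hPa hQa, mapRange, mapRange,
    rangeAdj P, kerAdj P, kerAdj Q, Submodule.inf_orthogonal, orthEqBot, supOrth, orthEqTop,
    inf_comm (LinearMap.ker Q) (LinearMap.ker P),
    inf_comm ((LinearMap.range Q)ᗮ) ((LinearMap.range P)ᗮ),
    Submodule.inf_orthogonal, orthEqBot]
  rw [rangeAdj Q, Submodule.inf_orthogonal, orthEqBot]
  tauto
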